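/- Let G be a finite simple graph with minimum degree at least 3 and let C be an edge 2-coloring of G. Among all characteristic subgraphs of G with respect to C that are disjoint unions of paths (maximum degree at most 2 and acyclic), let χ be one with the maximum number of connected components. Suppose uv is an edge of χ of color a that lies in a connected component of χ containing at least two edges. Then G has no edge of color a both of whose endpoints have degree 0 in χ. -/

import Mathlib

open SimpleGraph

/-- `C` is an edge 2-coloring of `G`: for every vertex, the edges incident to it
carry at most 2 distinct colors. -/
def IsEdge2Coloring {V : Type*} (G : SimpleGraph V) (C : Sym2 V → ℕ) : Prop :=
  ∀ v : V, (C '' G.incidenceSet v).ncard ≤ 2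

/-- The number of distinct colors used by a coloring `C` on the edges of `G`. -/
noncomputable def numColors {V : Type*} (G : SimpleGraph V) (C : Sym2 V → ℕ) : ℕ :=
  (C '' G.edgeSet).ncard

/-- `OPT G`: the maximum number of colors used by an edge 2-coloring of `G`. -/
noncomputable def OPT {V : Type*} (G : SimpleGraph V) : ℕ :=
  sSup {n : ℕ | ∃ C : Sym2 V → ℕ, IsEdge2Coloring G C ∧ numColors G C = n}

/-- `M` is a matching of `G`, given as a set of edges: the edges belong to `G` and
are pairwise vertex-disjoint. -/
def IsMatchingSet {V : Type*} (G : SimpleGraph V) (M : Set (Sym2 V)) : Prop :=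
  M ⊆ G.edgeSet ∧ ∀ e ∈ M, ∀ f ∈ M, e ≠ f → ∀ v : V, v ∈ e → v ∉ f

/-- `ALG G M`: number of colors produced by the matching based algorithm, i.e.
`|M|` plus the number of connected components of `G − M`. -/
noncomputable def ALG {V : Type*} (G : SimpleGraph V) (M : Set (Sym2 V)) : ℕ :=
  M.ncard + Nat.card (G.deleteEdges M).ConnectedComponent

/-- `H` is a characteristic subgraph of `G` with respect to the coloring `C`:
a subgraph of `G` containing exactly one edge of each color used by `C`. -/
def IsCharSubgraph {V : Type*} (G : SimpleGraph V) (C : Sym2 V → ℕ)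
    (H : SimpleGraph V) : Prop :=
  H ≤ G ∧ ∀ c ∈ C '' G.edgeSet, ∃! e, e ∈ H.edgeSet ∧ C e = c

/-- Number of connected components of `H` containing at least one edge
(the "characteristic paths" when `H` is a union of paths). -/
noncomputable def numEdgeComponents {V : Type*} (H : SimpleGraph V) : ℕ :=
  Nat.card {c : H.ConnectedComponent // ∃ a b : V, H.Adj a b ∧ H.connectedComponentMk a = c}

/-- If a set of vertices is closed under adjacency, then it absorbs walks. -/
lemma aux_walk_closed {V : Type*} {H : SimpleGraph V} {S : Set V}
    (hS : ∀ p ∈ S, ∀ q, H.Adj p q → q ∈ S) :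
    ∀ {p q : V}, H.Walk p q → p ∈ S → q ∈ S := by
  intro p q w
  induction w with
  | nil => exact id
  | cons h _ ih => exact fun hp => ih (hS _ hp _ h)

/-- If outside a set `S` the graph `H'` agrees with `K`, and `K`-edges never re-enter `S`,
then an `H'`-walk starting outside `S` yields `K`-reachability. -/
lemma aux_walk_reachable {V : Type*} {K H' : SimpleGraph V} {S : Set V}
    (hsub : ∀ p q, p ∉ S → H'.Adj p q → K.Adj p q)
    (hclosed : ∀ p q, p ∉ S → K.Adj p q → q ∉ S) :
    ∀ {p q : V}, H'.Walk p q → p ∉ S → K.Reachable p q := by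
  intro p q w
  induction w with
  | nil => exact fun _ => Reachable.refl _
  | cons h _ ih =>
    intro hp
    have hK := hsub _ _ hp h
    exact hK.reachable.trans (ih (hclosed _ _ hp hK))

/-- Claim (a): if `χ` is a path-union characteristic subgraph with the maximum number of
paths and `uv` is an edge of `χ` of color `a` lying on a path with at least two edges, then
no `a`-colored edge of `G` joins two vertices of degree 0 in `χ`. -/
theorem no_color_edge_between_isolated {V : Type*} [Fintype V] (G : SimpleGraph V)
    (hδ : ∀ v : V, 3 ≤ (G.neighborSet v).ncard)
    (C : Sym2 V → ℕ) (hC : IsEdge2Coloring G C)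
    (H : SimpleGraph V) (hH : IsCharSubgraph G C H)
    (hdeg : ∀ v : V, (H.neighborSet v).ncard ≤ 2) (hacyc : H.IsAcyclic)
    (hmaxpaths : ∀ H' : SimpleGraph V, IsCharSubgraph G C H' →
      (∀ v : V, (H'.neighborSet v).ncard ≤ 2) → H'.IsAcyclic →
      numEdgeComponents H' ≤ numEdgeComponents H)
    (u v : V) (a : ℕ) (huv : H.Adj u v) (hcol : C s(u, v) = a)
    (htwo : ∃ w x : V, H.Adj w x ∧ s(w, x) ≠ s(u, v) ∧ H.Reachable u w) :
    ¬ ∃ x y : V, G.Adj x y ∧ C s(x, y) = a ∧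
      (H.neighborSet x).ncard = 0 ∧ (H.neighborSet y).ncard = 0 := by
  classical
  rintro ⟨x, y, hxy, hxya, hxdeg, hydeg⟩
  have hxyne : x ≠ y := hxy.ne
  have hxe : H.neighborSet x = ∅ := (Set.ncard_eq_zero (Set.toFinite _)).mp hxdeg
  have hye : H.neighborSet y = ∅ := (Set.ncard_eq_zero (Set.toFinite _)).mp hydeg
  have hxiso : ∀ z, ¬ H.Adj x z := by
    intro z hz
    have : z ∈ H.neighborSet x := hz
    rw [hxe] at this
    exact this
  have hyiso : ∀ z, ¬ H.Adj y z := by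
    intro z hz
    have : z ∈ H.neighborSet y := hz
    rw [hye] at this
    exact this
  set K := H.deleteEdges {s(u,v)} with hKdef
  set H' := K ⊔ SimpleGraph.fromEdgeSet {s(x,y)} with hH'def
  have hKH : K ≤ H := SimpleGraph.deleteEdges_le _
  have hKadj : ∀ p q : V, K.Adj p q ↔ H.Adj p q ∧ s(p,q) ≠ s(u,v) := by
    intro p q
    rw [hKdef, SimpleGraph.deleteEdges_adj, Set.mem_singleton_iff]
  have hsxy : ∀ p q : V, s(p,q) = s(x,y) → p ≠ q ∧ (p = x ∨ p = y) := by
    intro p q h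
    rcases Sym2.eq_iff.mp h with ⟨rfl, rfl⟩ | ⟨rfl, rfl⟩
    · exact ⟨hxyne, Or.inl rfl⟩
    · exact ⟨Ne.symm hxyne, Or.inr rfl⟩
  have hadj' : ∀ p q : V, H'.Adj p q ↔ (K.Adj p q ∨ s(p,q) = s(x,y)) := by
    intro p q
    rw [hH'def, SimpleGraph.sup_adj, SimpleGraph.fromEdgeSet_adj, Set.mem_singleton_iff]
    constructor
    · rintro (h | ⟨h, -⟩)
      · exact Or.inl h
      · exact Or.inr h
    · rintro (h | h)
      · exact Or.inl h
      · exact Or.inr ⟨h, (hsxy p q h).1⟩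
  have hH'adjx : ∀ z, H'.Adj x z → z = y := by
    intro z hz
    rcases (hadj' x z).mp hz with h | h
    · exact absurd ((hKadj x z).mp h).1 (hxiso z)
    · rcases Sym2.eq_iff.mp h with ⟨-, rfl⟩ | ⟨rfl, rfl⟩
      · rfl
      · exact absurd rfl hxyne
  have hH'adjy : ∀ z, H'.Adj y z → z = x := by
    intro z hz
    rcases (hadj' y z).mp hz with h | h
    · exact absurd ((hKadj y z).mp h).1 (hyiso z)
    · rcases Sym2.eq_iff.mp h with ⟨rfl, rfl⟩ | ⟨-, rfl⟩
      · exact absurd rfl hxyne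
      · rfl
  have hSclosed : ∀ p ∈ ({x,y} : Set V), ∀ q, H'.Adj p q → q ∈ ({x,y} : Set V) := by
    intro p hp q h
    simp only [Set.mem_insert_iff, Set.mem_singleton_iff] at hp ⊢
    rcases hp with rfl | rfl
    · exact Or.inr (hH'adjx q h)
    · exact Or.inl (hH'adjy q h)
  have hKnotS : ∀ p q : V, K.Adj p q → q ∉ ({x,y} : Set V) := by
    intro p q h hq
    have hHpq : H.Adj p q := ((hKadj p q).mp h).1
    simp only [Set.mem_insert_iff, Set.mem_singleton_iff] at hq
    rcases hq with rfl | rfl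
    · exact hxiso p hHpq.symm
    · exact hyiso p hHpq.symm
  have lemA : ∀ {p q : V}, H'.Walk p q → p ∉ ({x,y} : Set V) → K.Reachable p q := by
    apply aux_walk_reachable
    · intro p q hp h
      rcases (hadj' p q).mp h with h' | h'
      · exact h'
      · exfalso
        apply hp
        rcases (hsxy p q h').2 with rfl | rfl
        · exact Set.mem_insert _ _
        · exact Set.mem_insert_of_mem _ rfl
    · exact fun p q _ h => hKnotS p q h
  -- edge set of H'
  have hxyndiag : ¬ (s(x,y) : Sym2 V).IsDiag := by
    rw [Sym2.mk_isDiag_iff]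
    exact hxyne
  have hedge' : H'.edgeSet = (H.edgeSet \ {s(u,v)}) ∪ {s(x,y)} := by
    rw [hH'def, SimpleGraph.edgeSet_sup, hKdef, SimpleGraph.edgeSet_deleteEdges,
      SimpleGraph.edgeSet_fromEdgeSet]
    congr 1
    ext e
    simp only [Set.mem_diff, Set.mem_singleton_iff, Set.mem_setOf_eq]
    constructor
    · exact fun h => h.1
    · rintro rfl
      exact ⟨rfl, hxyndiag⟩
  have huvH : s(u,v) ∈ H.edgeSet := huv
  -- H' is a characteristic subgraph
  have hchar' : IsCharSubgraph G C H' := by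
    constructor
    · rw [hH'def]
      apply sup_le (le_trans hKH hH.1)
      intro p q h
      obtain ⟨hm, -⟩ := (SimpleGraph.fromEdgeSet_adj _).mp h
      rcases Sym2.eq_iff.mp (Set.mem_singleton_iff.mp hm) with ⟨rfl, rfl⟩ | ⟨rfl, rfl⟩
      · exact hxy
      · exact hxy.symm
    · intro c hc
      obtain ⟨e0, he0, hunique⟩ := hH.2 c hc
      by_cases hca : c = a
      · subst hca
        refine ⟨s(x,y), ⟨?_, hxya⟩, ?_⟩
        · rw [hedge']
          exact Set.mem_union_right _ rfl
        · rintro f ⟨hf, hfc⟩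
          rw [hedge'] at hf
          rcases hf with ⟨hfH, hfne⟩ | hfxy
          · have h1 := hunique f ⟨hfH, hfc⟩
            have h2 := hunique s(u,v) ⟨huvH, hcol⟩
            exact absurd (h1.trans h2.symm) hfne
          · exact hfxy
      · refine ⟨e0, ⟨?_, he0.2⟩, ?_⟩
        · rw [hedge']
          refine Set.mem_union_left _ ⟨he0.1, ?_⟩
          intro hmem
          apply hca
          rw [← he0.2, Set.mem_singleton_iff.mp hmem, hcol]
        · rintro f ⟨hf, hfc⟩
          rw [hedge'] at hf
          rcases hf with ⟨hfH, -⟩ | hfxy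
          · exact hunique f ⟨hfH, hfc⟩
          · exfalso
            apply hca
            rw [← hfc, Set.mem_singleton_iff.mp hfxy, hxya]
  -- degrees of H'
  have hdeg' : ∀ z : V, (H'.neighborSet z).ncard ≤ 2 := by
    intro z
    by_cases hz : z ∈ ({x,y} : Set V)
    · simp only [Set.mem_insert_iff, Set.mem_singleton_iff] at hz
      rcases hz with rfl | rfl
      · have hsub : H'.neighborSet z ⊆ {y} := fun w hw => hH'adjx w hw
        calc (H'.neighborSet z).ncard ≤ ({y} : Set V).ncard :=
              Set.ncard_le_ncard hsub (Set.toFinite _)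
          _ ≤ 2 := by rw [Set.ncard_singleton]; omega
      · have hsub : H'.neighborSet z ⊆ {x} := fun w hw => hH'adjy w hw
        calc (H'.neighborSet z).ncard ≤ ({x} : Set V).ncard :=
              Set.ncard_le_ncard hsub (Set.toFinite _)
          _ ≤ 2 := by rw [Set.ncard_singleton]; omega
    · have hsub : H'.neighborSet z ⊆ H.neighborSet z := by
        intro w hw
        rcases (hadj' z w).mp hw with h | h
        · exact ((hKadj z w).mp h).1
        · exact absurd (by
            rcases (hsxy z w h).2 with rfl | rfl
            · exact Set.mem_insert _ _
            · exact Set.mem_insert_of_mem _ rfl) hz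
      exact le_trans (Set.ncard_le_ncard hsub (Set.toFinite _)) (hdeg z)
  -- H' is acyclic
  have hacyc' : H'.IsAcyclic := by
    intro z c hc
    by_cases hxe' : s(x,y) ∈ c.edges
    · have hxs : x ∈ c.support := c.fst_mem_support_of_mem_edges hxe'
      have hc' := hc.rotate hxs
      generalize c.rotate _ hxs = c' at hc'
      cases c' with
      | nil => exact Walk.IsCycle.not_of_nil hc'
      | cons h1 q =>
        rename_i b
        have hb : b = y := hH'adjx _ h1
        subst hb
        have hq := (Walk.cons_isCycle_iff q h1).mp hc'
        cases q with
        | nil => exact hxyne rfl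
        | cons h2 r =>
          rename_i b2
          have hb2 : b2 = x := hH'adjy _ h2
          subst hb2
          apply hq.2
          rw [Walk.edges_cons, Sym2.eq_swap]
          exact List.mem_cons_self
    · have hmem : ∀ e ∈ c.edges, e ∈ H.edgeSet := by
        intro e he
        have heH' : e ∈ H'.edgeSet := c.edges_subset_edgeSet he
        rw [hedge'] at heH'
        rcases heH' with ⟨h, -⟩ | h
        · exact h
        · exfalso
          apply hxe'
          rw [← Set.mem_singleton_iff.mp h]
          exact he
      exact hacyc (c.transfer H hmem) (hc.transfer hmem)
  -- counting components
  have hKH' : K ≤ H' := le_sup_left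
  let fK : {c : K.ConnectedComponent // ∃ a b : V, K.Adj a b ∧ K.connectedComponentMk a = c} →
      {c : H.ConnectedComponent // ∃ a b : V, H.Adj a b ∧ H.connectedComponentMk a = c} :=
    fun c => ⟨c.1.map (SimpleGraph.Hom.ofLE hKH), by
      obtain ⟨c0, p, q, hpq, rfl⟩ := c
      refine ⟨p, q, hKH hpq, ?_⟩
      show H.connectedComponentMk p =
        (K.connectedComponentMk p).map (SimpleGraph.Hom.ofLE hKH)
      rw [ConnectedComponent.map_mk]
      rfl⟩
  let fH' : {c : K.ConnectedComponent // ∃ a b : V, K.Adj a b ∧ K.connectedComponentMk a = c} →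
      {c : H'.ConnectedComponent // ∃ a b : V, H'.Adj a b ∧ H'.connectedComponentMk a = c} :=
    fun c => ⟨c.1.map (SimpleGraph.Hom.ofLE hKH'), by
      obtain ⟨c0, p, q, hpq, rfl⟩ := c
      refine ⟨p, q, hKH' hpq, ?_⟩
      show H'.connectedComponentMk p =
        (K.connectedComponentMk p).map (SimpleGraph.Hom.ofLE hKH')
      rw [ConnectedComponent.map_mk]
      rfl⟩
  have hfKsurj : Function.Surjective fK := by
    rintro ⟨c, p, q, hpq, rfl⟩
    by_cases hpquv : s(p,q) = s(u,v)
    · obtain ⟨w0, x0, hwx, hwxne, hur⟩ := htwo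
      have hKwx : K.Adj w0 x0 := (hKadj _ _).mpr ⟨hwx, hwxne⟩
      refine ⟨⟨K.connectedComponentMk w0, w0, x0, hKwx, rfl⟩, ?_⟩
      apply Subtype.ext
      show (K.connectedComponentMk w0).map _ = H.connectedComponentMk p
      rw [ConnectedComponent.map_mk]
      apply ConnectedComponent.sound
      refine hur.symm.trans ?_
      rcases Sym2.eq_iff.mp hpquv with ⟨rfl, rfl⟩ | ⟨rfl, rfl⟩
      · exact Reachable.refl _
      · exact huv.reachable
    · have hKpq : K.Adj p q := (hKadj _ _).mpr ⟨hpq, hpquv⟩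
      refine ⟨⟨K.connectedComponentMk p, p, q, hKpq, rfl⟩, ?_⟩
      apply Subtype.ext
      show (K.connectedComponentMk p).map _ = H.connectedComponentMk p
      rw [ConnectedComponent.map_mk]
      rfl
  have hfinj : Function.Injective fH' := by
    rintro ⟨c1, hc1⟩ ⟨c2, hc2⟩ heq
    obtain ⟨p, q, hpq, rfl⟩ := hc1
    obtain ⟨p', q', hpq', rfl⟩ := hc2
    apply Subtype.ext
    have heq' : H'.connectedComponentMk p = H'.connectedComponentMk p' := by
      have h := congrArg Subtype.val heq
      simpa only [fH', ConnectedComponent.map_mk, Hom.ofLE_apply] using h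
    obtain ⟨wk⟩ := ConnectedComponent.exact heq'
    exact ConnectedComponent.sound (lemA wk (hKnotS q p hpq.symm))
  have hxyH' : H'.Adj x y := (hadj' x y).mpr (Or.inr rfl)
  have hd0 : (⟨H'.connectedComponentMk x, x, y, hxyH', rfl⟩ :
      {c : H'.ConnectedComponent // ∃ a b : V, H'.Adj a b ∧ H'.connectedComponentMk a = c}) ∉
      Set.range fH' := by
    rintro ⟨⟨c, hc⟩, hceq⟩
    obtain ⟨p, q, hpq, rfl⟩ := hc
    have heq' : H'.connectedComponentMk p = H'.connectedComponentMk x := by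
      have h := congrArg Subtype.val hceq
      simpa only [fH', ConnectedComponent.map_mk, Hom.ofLE_apply] using h
    obtain ⟨wk⟩ := (ConnectedComponent.exact heq').symm
    have : p ∈ ({x,y} : Set V) := aux_walk_closed hSclosed wk (Set.mem_insert _ _)
    exact (hKnotS q p hpq.symm) this
  have h1 : numEdgeComponents H ≤ numEdgeComponents K :=
    Nat.card_le_card_of_surjective fK hfKsurj
  have h2 : numEdgeComponents K < numEdgeComponents H' := by
    rw [numEdgeComponents, numEdgeComponents]
    letI := Fintype.ofFinite
      {c : K.ConnectedComponent // ∃ a b : V, K.Adj a b ∧ K.connectedComponentMk a = c}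
    letI := Fintype.ofFinite
      {c : H'.ConnectedComponent // ∃ a b : V, H'.Adj a b ∧ H'.connectedComponentMk a = c}
    rw [Nat.card_eq_fintype_card, Nat.card_eq_fintype_card]
    exact Fintype.card_lt_of_injective_of_notMem fH' hfinj hd0
  have h3 := hmaxpaths H' hchar' hdeg' hacyc'
  omega
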